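/- Let D be an m×n real matrix and w ∈ ℝᵐ a vector with nonnegative entries. Then the function α ↦ -∑ᵢ wᵢ · log(φ((Dα)ᵢ)) is convex on ℝⁿ, where φ is the logistic function. -/

import Mathlib

open Real

lemma one_add_exp_pos (t : ℝ) : 0 < 1 + Real.exp t := by positivity

lemma softplus_hasDerivAt (t : ℝ) :
    HasDerivAt (fun t => Real.log (1 + Real.exp t)) (Real.exp t / (1 + Real.exp t)) t := by
  have h1 : HasDerivAt (fun t => 1 + Real.exp t) (Real.exp t) t :=
    (Real.hasDerivAt_exp t).const_add 1
  have := h1.log (one_add_exp_pos t).ne'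
  exact this

lemma softplus_deriv :
    deriv (fun t => Real.log (1 + Real.exp t)) = fun t => Real.exp t / (1 + Real.exp t) := by
  funext t
  exact (softplus_hasDerivAt t).deriv

lemma softplus_convex : ConvexOn ℝ Set.univ (fun t => Real.log (1 + Real.exp t)) := by
  have hd1 : Differentiable ℝ (fun t => Real.log (1 + Real.exp t)) :=
    fun t => (softplus_hasDerivAt t).differentiableAt
  have hderiv2 : ∀ t, HasDerivAt (fun t => Real.exp t / (1 + Real.exp t))
      (Real.exp t / (1 + Real.exp t) ^ 2) t := by
    intro t
    have h1 : HasDerivAt (fun t => 1 + Real.exp t) (Real.exp t) t :=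
      (Real.hasDerivAt_exp t).const_add 1
    have h : HasDerivAt (fun t => Real.exp t / (1 + Real.exp t)) _ t :=
      (Real.hasDerivAt_exp t).div h1 (one_add_exp_pos t).ne'
    convert h using 1
    ring
  have hd2 : Differentiable ℝ (deriv (fun t => Real.log (1 + Real.exp t))) := by
    rw [softplus_deriv]
    exact fun t => (hderiv2 t).differentiableAt
  refine convexOn_univ_of_deriv2_nonneg hd1 hd2 ?_
  intro t
  have : deriv^[2] (fun t => Real.log (1 + Real.exp t)) t
      = Real.exp t / (1 + Real.exp t) ^ 2 := by
    simp only [Function.iterate_succ, Function.iterate_zero, Function.comp_apply, id_eq]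
    rw [softplus_deriv]
    exact (hderiv2 t).deriv
  rw [this]
  positivity

theorem neg_weighted_log_logistic_convex {m n : ℕ}
    (D : Matrix (Fin m) (Fin n) ℝ) (w : Fin m → ℝ) (hw : ∀ i, 0 ≤ w i) :
    ConvexOn ℝ Set.univ
      (fun α : Fin n → ℝ =>
        -∑ i, w i * Real.log (1 / (1 + Real.exp (-(D.mulVec α i))))) := by
  have key : ∀ α : Fin n → ℝ,
      -∑ i, w i * Real.log (1 / (1 + Real.exp (-(D.mulVec α i))))
      = ∑ i, w i * Real.log (1 + Real.exp (-(D.mulVec α i))) := by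
    intro α
    rw [← Finset.sum_neg_distrib]
    congr 1; funext i
    rw [one_div, Real.log_inv]
    ring
  simp only [key]
  have hterm : ∀ i : Fin m, ConvexOn ℝ Set.univ
      (fun α : Fin n → ℝ => w i * Real.log (1 + Real.exp (-(D.mulVec α i)))) := by
    intro i
    have L : (Fin n → ℝ) →ᵃ[ℝ] ℝ :=
      (-((LinearMap.proj i).comp D.mulVecLin)).toAffineMap
    have hc := softplus_convex.comp_affineMap
      ((-((LinearMap.proj i : (Fin m → ℝ) →ₗ[ℝ] ℝ).comp D.mulVecLin)).toAffineMap)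
    have heq : ((fun t => Real.log (1 + Real.exp t)) ∘
        ((-((LinearMap.proj i : (Fin m → ℝ) →ₗ[ℝ] ℝ).comp D.mulVecLin)).toAffineMap))
        = fun α : Fin n → ℝ => Real.log (1 + Real.exp (-(D.mulVec α i))) := by
      funext α; simp [Matrix.mulVecLin]
    rw [heq, Set.preimage_univ] at hc
    exact hc.smul (hw i)
  classical
  have : ∀ s : Finset (Fin m), ConvexOn ℝ Set.univ
      (fun α : Fin n → ℝ => ∑ i ∈ s, w i * Real.log (1 + Real.exp (-(D.mulVec α i)))) := by
    intro s
    induction s using Finset.induction with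
    | empty => simpa using convexOn_const (0 : ℝ) convex_univ
    | insert _ _ h ih =>
        simp only [Finset.sum_insert h]
        exact (hterm _).add ih
  exact this Finset.univ
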